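/- arXiv:0809.2479 — 3 statements merged into one kernel-verified Lean document; each statement's English description precedes it below -/
import Mathlib

section
/- Let k be a complete non-archimedean valued field and let f, g, h ∈ k[[T]] be formal power series with nonzero constant terms such that f = g·h. Suppose the radius of convergence of g equals the radius of convergence of its multiplicative inverse g⁻¹, the radius of convergence of h equals that of h⁻¹, and the radii of convergence of g and h are distinct. Then the radius of convergence of f equals the minimum of the radii of convergence of g and h. -/
open Filter PowerSeries Topology

/-- Radius of convergence of a formal power series over a normed field:
`liminf ‖aₙ‖⁻¹ ^ (1/n)`, computed in `ℝ≥0∞` (so `‖0‖⁻¹ = ∞`). -/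
noncomputable def radiusOfConv {k : Type*} [NormedField k] (f : PowerSeries k) : ENNReal :=
  Filter.liminf (fun n : ℕ => ((‖PowerSeries.coeff n f‖₊ : ENNReal))⁻¹ ^ (1 / (n : ℝ)))
    Filter.atTop

lemma exists_bound_of_lt_radius {k : Type*} [NormedField k] (a : PowerSeries k) {c : NNReal}
    (hc : (c : ENNReal) < radiusOfConv a) :
    ∃ M : NNReal, 0 < M ∧ ∀ n, ‖PowerSeries.coeff n a‖₊ * c ^ n ≤ M := by
  have hev := Filter.eventually_lt_of_lt_liminf hc
  rw [Filter.eventually_atTop] at hev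
  obtain ⟨N, hN⟩ := hev
  refine ⟨1 ⊔ (Finset.range (N + 1)).sup (fun n => ‖PowerSeries.coeff n a‖₊ * c ^ n),
    by simp, ?_⟩
  intro n
  rcases lt_or_ge n (N + 1) with hn | hn
  · exact le_sup_of_le_right (Finset.le_sup (f := fun n => ‖PowerSeries.coeff n a‖₊ * c ^ n) (Finset.mem_range.mpr hn))
  · refine le_sup_of_le_left ?_
    have hn1 : n ≠ 0 := by omega
    have hx := hN n (by omega)
    set x := ‖PowerSeries.coeff n a‖₊ with hxdef
    rcases eq_or_ne x 0 with hx0 | hx0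
    · simp [hx0]
    rcases eq_or_ne c 0 with hc0 | hc0
    · simp [hc0, zero_pow hn1]
    have hnn : (0:ℝ) < (n : ℝ) := by positivity
    have hpow : ((c : ENNReal)) ^ (n : ℕ) ≤ ((x : ENNReal))⁻¹ := by
      have h1 : ((c : ENNReal)) ^ ((n : ℝ)) ≤ (((x : ENNReal))⁻¹ ^ (1 / (n : ℝ))) ^ ((n : ℝ)) :=
        ENNReal.rpow_le_rpow hx.le hnn.le
      rw [← ENNReal.rpow_mul, one_div_mul_cancel hnn.ne', ENNReal.rpow_one,
        ENNReal.rpow_natCast] at h1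
      exact h1
    have hxe : ((x : ENNReal))⁻¹ = ((x⁻¹ : NNReal) : ENNReal) := by
      rw [ENNReal.coe_inv hx0]
    rw [hxe, ← ENNReal.coe_pow, ENNReal.coe_le_coe] at hpow
    calc x * c ^ n ≤ x * x⁻¹ := mul_le_mul_right hpow x
      _ = 1 := mul_inv_cancel₀ hx0
lemma le_radius_of_bound {k : Type*} [NormedField k] (a : PowerSeries k) {c M : NNReal}
    (hM : 0 < M) (hb : ∀ n, ‖PowerSeries.coeff n a‖₊ * c ^ n ≤ M) :
    (c : ENNReal) ≤ radiusOfConv a := by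
  rcases eq_or_ne c 0 with rfl | hc0
  · simp
  -- the comparison sequence tends to c
  have hM0 : (M : NNReal)⁻¹ ≠ 0 := by simp [hM.ne']
  have htN : Tendsto (fun n : ℕ => (M⁻¹ : NNReal) ^ (1 / (n : ℝ))) atTop (𝓝 1) := by
    have hcont : ContinuousAt (fun p : NNReal × ℝ => p.1 ^ p.2) (M⁻¹, (0:ℝ)) :=
      NNReal.continuousAt_rpow (Or.inl hM0)
    have h0 : Tendsto (fun n : ℕ => (1 / (n : ℝ))) atTop (𝓝 0) :=
      tendsto_one_div_atTop_nhds_zero_nat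
    have := hcont.tendsto.comp ((tendsto_const_nhds : Tendsto (fun _ : ℕ => (M⁻¹ : NNReal))
      atTop (𝓝 M⁻¹)).prodMk_nhds h0)
    simpa [Function.comp_def, NNReal.rpow_zero] using this
  have ht : Tendsto (fun n : ℕ => (c : ENNReal) * ((M⁻¹ : NNReal) : ENNReal) ^ (1 / (n : ℝ)))
      atTop (𝓝 (c : ENNReal)) := by
    have h1 : Tendsto (fun n : ℕ => (((M⁻¹ : NNReal) ^ (1 / (n : ℝ)) : NNReal) : ENNReal))
        atTop (𝓝 ((1 : NNReal) : ENNReal)) := ENNReal.tendsto_coe.mpr htN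
    have h2 : Tendsto (fun n : ℕ => ((M⁻¹ : NNReal) : ENNReal) ^ (1 / (n : ℝ)))
        atTop (𝓝 1) := by
      refine h1.congr (fun n => ?_) |>.mono_right ?_
      · rw [ENNReal.coe_rpow_of_ne_zero hM0]
      · simp
    have := ENNReal.Tendsto.const_mul (a := (c : ENNReal)) h2 (Or.inl one_ne_zero)
    simpa using this
  have hmono : ∀ᶠ (n : ℕ) in atTop, (c : ENNReal) * ((M⁻¹ : NNReal) : ENNReal) ^ (1 / (n : ℝ)) ≤
      ((‖PowerSeries.coeff n a‖₊ : ENNReal))⁻¹ ^ (1 / (n : ℝ)) := by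
    filter_upwards [eventually_ge_atTop 1] with n hn
    have hnn : (0:ℝ) < (n : ℝ) := by positivity
    set x := ‖PowerSeries.coeff n a‖₊ with hxdef
    have hxb : (x : ENNReal) * (c : ENNReal) ^ (n : ℕ) ≤ (M : ENNReal) := by
      rw [← ENNReal.coe_pow, ← ENNReal.coe_mul, ENNReal.coe_le_coe]
      exact hb n
    have hMM : (x : ENNReal) * (c : ENNReal) ^ (n : ℕ) * ((M : ENNReal))⁻¹ ≤ 1 := by
      rw [← ENNReal.le_inv_iff_mul_le, inv_inv]
      exact hxb
    have hinv : (c : ENNReal) ^ (n : ℕ) * ((M : ENNReal))⁻¹ ≤ ((x : ENNReal))⁻¹ := by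
      rw [ENNReal.le_inv_iff_mul_le]
      calc (c:ENNReal) ^ (n:ℕ) * ((M : ENNReal))⁻¹ * (x : ENNReal)
          = (x : ENNReal) * (c:ENNReal) ^ (n:ℕ) * ((M : ENNReal))⁻¹ := by ring
        _ ≤ 1 := hMM
    have hr := ENNReal.rpow_le_rpow hinv (by positivity : (0:ℝ) ≤ 1 / (n:ℝ))
    rw [ENNReal.mul_rpow_of_nonneg _ _ (by positivity)] at hr
    have hcn : (((c : ENNReal)) ^ (n : ℕ)) ^ (1 / (n:ℝ)) = (c : ENNReal) := by
      rw [← ENNReal.rpow_natCast, ← ENNReal.rpow_mul, mul_one_div_cancel hnn.ne',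
        ENNReal.rpow_one]
    rw [hcn] at hr
    rw [ENNReal.coe_inv hM.ne']
    exact hr
  calc (c : ENNReal) = Filter.liminf
        (fun n : ℕ => (c : ENNReal) * ((M⁻¹ : NNReal) : ENNReal) ^ (1 / (n : ℝ))) atTop :=
        (ht.liminf_eq).symm
    _ ≤ radiusOfConv a := Filter.liminf_le_liminf hmono

lemma min_radius_le_radius_mul {k : Type*} [NormedField k] [IsUltrametricDist k]
    (a b : PowerSeries k) :
    min (radiusOfConv a) (radiusOfConv b) ≤ radiusOfConv (a * b) := by
  refine ENNReal.le_of_forall_nnreal_lt (fun r hr => ?_)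
  rcases eq_or_ne r 0 with rfl | hr0
  · simp
  obtain ⟨Mg, hMg, hbg⟩ := exists_bound_of_lt_radius a (hr.trans_le (min_le_left _ _))
  obtain ⟨Mh, hMh, hbh⟩ := exists_bound_of_lt_radius b (hr.trans_le (min_le_right _ _))
  refine le_radius_of_bound _ (mul_pos hMg hMh) (fun n => ?_)
  have hkey : ‖PowerSeries.coeff n (a * b)‖₊ ≤ Mg * Mh / r ^ n := by
    rw [PowerSeries.coeff_mul]
    refine IsUltrametricDist.nnnorm_sum_le_of_forall_le (fun p hp => ?_)
    rw [Finset.HasAntidiagonal.mem_antidiagonal] at hp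
    rw [nnnorm_mul]
    rw [le_div_iff₀ (pow_pos (pos_iff_ne_zero.mpr hr0) _)]
    calc ‖PowerSeries.coeff p.1 a‖₊ * ‖PowerSeries.coeff p.2 b‖₊ * r ^ n
        = (‖PowerSeries.coeff p.1 a‖₊ * r ^ p.1) * (‖PowerSeries.coeff p.2 b‖₊ * r ^ p.2) := by
          rw [← hp, pow_add]; ring
      _ ≤ Mg * Mh := mul_le_mul' (hbg p.1) (hbh p.2)
  calc ‖PowerSeries.coeff n (a * b)‖₊ * r ^ n ≤ (Mg * Mh / r ^ n) * r ^ n :=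
        mul_le_mul_left hkey _
    _ = Mg * Mh := div_mul_cancel₀ _ (pow_ne_zero _ hr0)

lemma radius_eq_of_radius_lt {k : Type*} [NormedField k] [IsUltrametricDist k]
    (f g h : PowerSeries k) (hh0 : PowerSeries.constantCoeff h ≠ 0) (hfgh : f = g * h)
    (hh : radiusOfConv h = radiusOfConv h⁻¹) (hlt : radiusOfConv g < radiusOfConv h) :
    radiusOfConv f = radiusOfConv g := by
  have h1 : radiusOfConv g ≤ radiusOfConv f := by
    have := min_radius_le_radius_mul g h
    rw [← hfgh, min_eq_left hlt.le] at this
    exact this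
  have h2 : radiusOfConv f ≤ radiusOfConv g := by
    have hg' : g = f * h⁻¹ := by
      rw [hfgh, mul_assoc, PowerSeries.mul_inv_cancel h hh0, mul_one]
    have hmin := min_radius_le_radius_mul f h⁻¹
    rw [← hg', ← hh] at hmin
    by_contra hcon
    push_neg at hcon
    exact absurd hmin (not_le.mpr (lt_min hcon hlt))
  exact le_antisymm h2 h1

theorem radius_of_product_of_distinct_radii
    {k : Type*} [NormedField k] [CompleteSpace k] [IsUltrametricDist k]
    (f g h : PowerSeries k)
    (hg0 : PowerSeries.constantCoeff g ≠ 0)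
    (hh0 : PowerSeries.constantCoeff h ≠ 0)
    (hfgh : f = g * h)
    (hg : radiusOfConv g = radiusOfConv g⁻¹)
    (hh : radiusOfConv h = radiusOfConv h⁻¹)
    (hne : radiusOfConv g ≠ radiusOfConv h) :
    radiusOfConv f = min (radiusOfConv g) (radiusOfConv h) := by
  rcases hne.lt_or_gt with hlt | hlt
  · rw [min_eq_left hlt.le]
    exact radius_eq_of_radius_lt f g h hh0 hfgh hh hlt
  · rw [min_eq_right hlt.le]
    exact radius_eq_of_radius_lt f h g hg0 (by rw [hfgh, mul_comm]) hg hlt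
end

section
/- Let p be a prime. The Artin–Hasse exponential series exp(T + T^p/p + T^{p²}/p² + ⋯) = exp(∑_{i≥0} T^{pⁱ}/pⁱ), computed as a formal power series over ℚ, has all its coefficients in ℤ_{(p)} (equivalently, p-adically integral coefficients). -/
open PowerSeries
open scoped Classical

/-- The inner series `∑_{i≥0} T^{pⁱ}/pⁱ ∈ ℚ[[T]]`: the coefficient of `Tⁿ` is `1/n`
if `n` is a power of `p` (note `1/pⁱ = 1/n` when `n = pⁱ`), and `0` otherwise. -/
noncomputable def artinHasseInner (p : ℕ) : PowerSeries ℚ :=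
  PowerSeries.mk fun n => if ∃ i : ℕ, n = p ^ i then 1 / (n : ℚ) else 0

/-- The Artin–Hasse exponential `exp(∑_{i≥0} T^{pⁱ}/pⁱ) ∈ ℚ[[T]]`, where the
composition with `exp(X) = ∑ Xᵐ/m!` is computed coefficientwise (the coefficient of
`Tⁿ` only receives contributions from `m ≤ n` since the inner series has zero
constant term). -/
noncomputable def artinHasse (p : ℕ) : PowerSeries ℚ :=
  PowerSeries.mk fun n =>
    ∑ m ∈ Finset.range (n + 1),
      (1 / (m.factorial : ℚ)) * PowerSeries.coeff n ((artinHasseInner p) ^ m)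


noncomputable def Ecal (f : PowerSeries ℚ) : PowerSeries ℚ :=
  PowerSeries.mk fun n =>
    ∑ m ∈ Finset.range (n + 1),
      (1 / (m.factorial : ℚ)) * PowerSeries.coeff n (f ^ m)

theorem coeff_pow_eq_zero {R : Type*} [CommRing R] {f : PowerSeries R}
    (hf : constantCoeff f = 0) {n m : ℕ} (h : n < m) : coeff n (f ^ m) = 0 := by
  have hX : (X : PowerSeries R) ∣ f := X_dvd_iff.mpr hf
  exact X_pow_dvd_iff.mp (pow_dvd_pow_of_dvd hX m) n h

theorem coeff_pow_mul_pow_eq_zero {R : Type*} [CommRing R] {f g : PowerSeries R}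
    (hf : constantCoeff f = 0) (hg : constantCoeff g = 0) {n k l : ℕ} (h : n < k + l) :
    coeff n (f ^ k * g ^ l) = 0 := by
  have : (X : PowerSeries R) ^ (k + l) ∣ f ^ k * g ^ l := by
    rw [pow_add]
    exact mul_dvd_mul (pow_dvd_pow_of_dvd (X_dvd_iff.mpr hf) k)
      (pow_dvd_pow_of_dvd (X_dvd_iff.mpr hg) l)
  exact X_pow_dvd_iff.mp this n h

theorem coeff_Ecal_eq {f : PowerSeries ℚ} (hf : constantCoeff f = 0) {n N : ℕ}
    (h : n < N) :
    coeff n (Ecal f) = ∑ m ∈ Finset.range N, (1 / (m.factorial : ℚ)) * coeff n (f ^ m) := by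
  rw [Ecal, coeff_mk]
  refine Finset.sum_subset (Finset.range_subset_range.mpr h) ?_
  intro m _ hm
  rw [coeff_pow_eq_zero hf (by simpa using hm), mul_zero]

theorem Ecal_add {f g : PowerSeries ℚ} (hf : constantCoeff f = 0)
    (hg : constantCoeff g = 0) : Ecal (f + g) = Ecal f * Ecal g := by
  ext n
  set t : ℕ → ℕ → ℚ := fun k l =>
    (1 / (k.factorial : ℚ)) * (1 / (l.factorial : ℚ)) * coeff n (f ^ k * g ^ l) with ht
  have hvanish : ∀ k l : ℕ, n < k + l → t k l = 0 := by
    intro k l h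
    simp only [ht, coeff_pow_mul_pow_eq_zero hf hg h, mul_zero]
  have hR : coeff n (Ecal f * Ecal g)
      = ∑ k ∈ Finset.range (n + 1), ∑ l ∈ Finset.range (n + 1), t k l := by
    rw [coeff_mul]
    have step : ∀ x ∈ Finset.HasAntidiagonal.antidiagonal n,
        coeff x.1 (Ecal f) * coeff x.2 (Ecal g)
        = ∑ k ∈ Finset.range (n + 1), ∑ l ∈ Finset.range (n + 1),
            ((1 / (k.factorial : ℚ)) * (1 / (l.factorial : ℚ)))
              * (coeff x.1 (f ^ k) * coeff x.2 (g ^ l)) := by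
      intro x hx
      have hx1 : x.1 < n + 1 :=
        Nat.lt_succ_of_le (Finset.HasAntidiagonal.antidiagonal.fst_le hx)
      have hx2 : x.2 < n + 1 :=
        Nat.lt_succ_of_le (Finset.HasAntidiagonal.antidiagonal.snd_le hx)
      rw [coeff_Ecal_eq hf hx1, coeff_Ecal_eq hg hx2, Finset.sum_mul_sum]
      apply Finset.sum_congr rfl; intro k _
      apply Finset.sum_congr rfl; intro l _
      ring
    rw [Finset.sum_congr rfl step, Finset.sum_comm]
    apply Finset.sum_congr rfl; intro k _
    rw [Finset.sum_comm]
    apply Finset.sum_congr rfl; intro l _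
    rw [← Finset.mul_sum, ← coeff_mul]
  have hL : coeff n (Ecal (f + g))
      = ∑ m ∈ Finset.range (n + 1), ∑ k ∈ Finset.range (m + 1), t k (m - k) := by
    rw [Ecal, coeff_mk]
    apply Finset.sum_congr rfl
    intro m _
    rw [add_pow]
    rw [map_sum, Finset.mul_sum]
    apply Finset.sum_congr rfl
    intro k hk
    have hk' : k ≤ m := Nat.lt_succ_iff.mp (Finset.mem_range.mp hk)
    have hfact : (1 / (m.factorial : ℚ)) * (m.choose k : ℚ) =
        (1 / (k.factorial : ℚ)) * (1 / ((m - k).factorial : ℚ)) := by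
      have h := Nat.choose_mul_factorial_mul_factorial hk'
      have h' : ((m.choose k : ℚ)) * (k.factorial : ℚ) * ((m - k).factorial : ℚ)
          = (m.factorial : ℚ) := by exact_mod_cast congrArg (Nat.cast : ℕ → ℚ) h
      field_simp
      linarith [h']
    have : f ^ k * g ^ (m - k) * (m.choose k : PowerSeries ℚ)
        = (m.choose k : ℕ) • (f ^ k * g ^ (m - k)) := by
      rw [nsmul_eq_mul]; ring
    rw [this, map_nsmul, nsmul_eq_mul, ht]
    push_cast
    calc (1 / (m.factorial : ℚ)) * ((m.choose k : ℚ) * coeff n (f ^ k * g ^ (m - k)))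
        = ((1 / (m.factorial : ℚ)) * (m.choose k : ℚ)) * coeff n (f ^ k * g ^ (m - k)) := by
          ring
      _ = _ := by rw [hfact]
  rw [hL, hR]
  -- reindexing
  conv_lhs => rw [Finset.sum_sigma']
  conv_rhs => rw [← Finset.sum_product']
  rw [← Finset.sum_filter_of_ne (p := fun x : ℕ × ℕ => x.1 + x.2 ≤ n)
    (fun x _ hx => by by_contra hc; exact hx (hvanish x.1 x.2 (not_le.mp hc)))]
  refine Finset.sum_nbij' (fun x => (x.2, x.1 - x.2)) (fun y => ⟨y.1 + y.2, y.1⟩) ?_ ?_ ?_ ?_ ?_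
  · rintro ⟨m, k⟩ hx
    simp only [Finset.mem_sigma, Finset.mem_range, Nat.lt_succ_iff] at hx
    simp only [Finset.mem_filter, Finset.mem_product, Finset.mem_range, Nat.lt_succ_iff]
    obtain ⟨h1, h2⟩ := hx
    exact ⟨⟨le_trans h2 h1, le_trans (Nat.sub_le _ _) h1⟩, by omega⟩
  · rintro ⟨k, l⟩ hy
    simp only [Finset.mem_filter, Finset.mem_product, Finset.mem_range, Nat.lt_succ_iff] at hy
    simp only [Finset.mem_sigma, Finset.mem_range, Nat.lt_succ_iff]
    exact ⟨hy.2, Nat.le_add_right _ _⟩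
  · rintro ⟨m, k⟩ hx
    simp only [Finset.mem_sigma, Finset.mem_range, Nat.lt_succ_iff] at hx
    have : k + (m - k) = m := by omega
    simp [this]
  · rintro ⟨k, l⟩ _
    simp
  · rintro ⟨m, k⟩ hx
    rfl

theorem Ecal_zero : Ecal 0 = 1 := by
  ext n
  rw [Ecal, coeff_mk]
  rw [Finset.sum_eq_single 0]
  · simp
  · intro m _ hm
    rw [zero_pow hm, map_zero, mul_zero]
  · intro h
    exact absurd (Finset.mem_range.mpr (Nat.succ_pos n)) h

theorem constantCoeff_Ecal_smul {f : PowerSeries ℚ} (hf : constantCoeff f = 0) (k : ℕ) :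
    constantCoeff (k • f) = 0 := by
  rw [map_nsmul, hf, smul_zero]

theorem Ecal_pow {f : PowerSeries ℚ} (hf : constantCoeff f = 0) (k : ℕ) :
    (Ecal f) ^ k = Ecal (k • f) := by
  induction k with
  | zero => rw [pow_zero, zero_smul, Ecal_zero]
  | succ k ih =>
      rw [pow_succ, ih, ← Ecal_add (constantCoeff_Ecal_smul hf k) hf, succ_nsmul]

noncomputable def pexpand (p : ℕ) {R : Type*} [CommRing R] (f : PowerSeries R) :
    PowerSeries R :=
  PowerSeries.mk fun n => if p ∣ n then PowerSeries.coeff (n / p) f else 0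

theorem coeff_pexpand (p : ℕ) {R : Type*} [CommRing R] (f : PowerSeries R) (n : ℕ) :
    coeff n (pexpand p f) = if p ∣ n then coeff (n / p) f else 0 := coeff_mk _ _

theorem constantCoeff_pexpand (p : ℕ) {R : Type*} [CommRing R] (f : PowerSeries R) :
    constantCoeff (pexpand p f) = constantCoeff f := by
  rw [← coeff_zero_eq_constantCoeff_apply, ← coeff_zero_eq_constantCoeff_apply,
    coeff_pexpand, if_pos (dvd_zero p), Nat.zero_div]

theorem pexpand_one {p : ℕ} (hp : 0 < p) {R : Type*} [CommRing R] :
    pexpand p (1 : PowerSeries R) = 1 := by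
  ext n
  rw [coeff_pexpand]
  rcases eq_or_ne n 0 with rfl | hn
  · simp
  · by_cases hd : p ∣ n
    · rw [if_pos hd, coeff_one, coeff_one, if_neg hn, if_neg]
      have h1 := Nat.le_of_dvd (Nat.pos_of_ne_zero hn) hd
      have := Nat.div_pos h1 hp
      omega
    · rw [if_neg hd, coeff_one, if_neg hn]

theorem pexpand_mul {p : ℕ} (hp : 0 < p) {R : Type*} [CommRing R] (f g : PowerSeries R) :
    pexpand p (f * g) = pexpand p f * pexpand p g := by
  ext n
  rw [coeff_mul, coeff_pexpand]
  by_cases hd : p ∣ n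
  · obtain ⟨c, rfl⟩ := hd
    rw [if_pos (dvd_mul_right p c), Nat.mul_div_cancel_left c hp, coeff_mul]
    have hfil : ∑ x ∈ Finset.HasAntidiagonal.antidiagonal (p * c),
        coeff x.1 (pexpand p f) * coeff x.2 (pexpand p g)
        = ∑ x ∈ (Finset.HasAntidiagonal.antidiagonal (p * c)).filter (fun x => p ∣ x.1 ∧ p ∣ x.2),
            coeff x.1 (pexpand p f) * coeff x.2 (pexpand p g) := by
      refine (Finset.sum_filter_of_ne ?_).symm
      rintro ⟨a, b⟩ _ hne
      constructor
      · by_contra hc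
        rw [coeff_pexpand, if_neg hc, zero_mul] at hne; exact hne rfl
      · by_contra hc
        rw [coeff_pexpand p g, if_neg hc, mul_zero] at hne; exact hne rfl
    rw [hfil]
    refine Finset.sum_nbij' (fun y : ℕ × ℕ => (p * y.1, p * y.2))
      (fun x : ℕ × ℕ => (x.1 / p, x.2 / p)) ?_ ?_ ?_ ?_ ?_
    · rintro ⟨a, b⟩ hy
      simp only [Finset.HasAntidiagonal.mem_antidiagonal] at hy
      simp only [Finset.mem_filter, Finset.HasAntidiagonal.mem_antidiagonal]
      exact ⟨by rw [← Nat.mul_add, hy], dvd_mul_right p a, dvd_mul_right p b⟩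
    · rintro ⟨a, b⟩ hx
      simp only [Finset.mem_filter, Finset.HasAntidiagonal.mem_antidiagonal] at hx
      obtain ⟨hsum, ⟨u, hu⟩, v, hv⟩ := hx
      simp only [Finset.HasAntidiagonal.mem_antidiagonal, hu, hv]
      rw [Nat.mul_div_cancel_left u hp, Nat.mul_div_cancel_left v hp]
      rw [hu, hv, ← Nat.mul_add] at hsum
      exact Nat.eq_of_mul_eq_mul_left hp hsum
    · rintro ⟨a, b⟩ _
      simp [Nat.mul_div_cancel_left _ hp]
    · rintro ⟨a, b⟩ hx
      simp only [Finset.mem_filter, Finset.HasAntidiagonal.mem_antidiagonal] at hx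
      obtain ⟨hsum, ⟨u, hu⟩, v, hv⟩ := hx
      simp only [hu, hv, Nat.mul_div_cancel_left _ hp]
    · rintro ⟨a, b⟩ _
      simp only
      rw [coeff_pexpand, coeff_pexpand, if_pos (dvd_mul_right p a), if_pos (dvd_mul_right p b),
        Nat.mul_div_cancel_left a hp, Nat.mul_div_cancel_left b hp]
  · rw [if_neg hd]
    refine (Finset.sum_eq_zero ?_).symm
    rintro ⟨a, b⟩ hx
    simp only [Finset.HasAntidiagonal.mem_antidiagonal] at hx
    by_cases ha : p ∣ a
    · have hb : ¬ p ∣ b := fun h => hd (hx ▸ Nat.dvd_add ha h)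
      rw [coeff_pexpand p g, if_neg hb, mul_zero]
    · rw [coeff_pexpand, if_neg ha, zero_mul]

theorem pexpand_pow {p : ℕ} (hp : 0 < p) {R : Type*} [CommRing R] (f : PowerSeries R) (m : ℕ) :
    (pexpand p f) ^ m = pexpand p (f ^ m) := by
  induction m with
  | zero => rw [pow_zero, pow_zero, pexpand_one hp]
  | succ m ih => rw [pow_succ, pow_succ, ih, pexpand_mul hp]

theorem Ecal_pexpand {p : ℕ} (hp : 0 < p) {f : PowerSeries ℚ} (hf : constantCoeff f = 0) :
    Ecal (pexpand p f) = pexpand p (Ecal f) := by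
  ext n
  rw [Ecal, coeff_mk, coeff_pexpand]
  by_cases hd : p ∣ n
  · rw [if_pos hd]
    have hle : n / p < n + 1 := Nat.lt_succ_of_le (Nat.div_le_self n p)
    rw [coeff_Ecal_eq hf hle]
    apply Finset.sum_congr rfl
    intro m _
    rw [pexpand_pow hp, coeff_pexpand, if_pos hd]
  · rw [if_neg hd]
    apply Finset.sum_eq_zero
    intro m _
    rw [pexpand_pow hp, coeff_pexpand, if_neg hd, mul_zero]


theorem artinHasse_eq_Ecal (p : ℕ) : artinHasse p = Ecal (artinHasseInner p) := rfl

theorem constantCoeff_inner (p : ℕ) : constantCoeff (artinHasseInner p) = 0 := by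
  rw [← coeff_zero_eq_constantCoeff_apply, artinHasseInner, coeff_mk]
  split <;> simp

theorem inner_id {p : ℕ} (hp : p.Prime) :
    (p : ℚ) • artinHasseInner p
      = pexpand p (artinHasseInner p) + (p : ℚ) • (X : PowerSeries ℚ) := by
  have hp0 : (p : ℚ) ≠ 0 := Nat.cast_ne_zero.mpr hp.pos.ne'
  ext n
  simp only [map_add, map_smul, smul_eq_mul, coeff_pexpand, artinHasseInner, coeff_mk,
    coeff_X]
  by_cases h1 : n = 1
  · subst h1
    rw [if_pos ⟨0, (pow_zero p).symm⟩, if_neg (Nat.Prime.not_dvd_one hp), if_pos rfl]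
    norm_num
  · by_cases hpow : ∃ i, n = p ^ i
    · obtain ⟨i, rfl⟩ := hpow
      have hi : i ≠ 0 := by rintro rfl; exact h1 (pow_zero p)
      have hd : p ∣ p ^ i := dvd_pow_self p hi
      have hdiv : p ^ i / p = p ^ (i - 1) := by
        have h2 : p ^ i / p ^ 1 = p ^ (i - 1) :=
          Nat.pow_div (Nat.one_le_iff_ne_zero.mpr hi) hp.pos
        rwa [pow_one] at h2
      rw [if_pos ⟨i, rfl⟩, if_pos hd, hdiv, if_pos ⟨i - 1, rfl⟩, if_neg h1]
      have hps : (p : ℚ) ^ i = p * p ^ (i - 1) := by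
        rw [← pow_succ']
        congr 1
        omega
      push_cast
      rw [hps, mul_zero, add_zero]
      field_simp
    · rw [if_neg hpow, if_neg h1]
      simp only [mul_zero, zero_add, add_zero]
      by_cases hd : p ∣ n
      · rw [if_pos hd]
        have : ¬ ∃ i, n / p = p ^ i := by
          rintro ⟨i, hi⟩
          exact hpow ⟨i + 1, by rw [pow_succ', ← hi, Nat.mul_div_cancel' hd]⟩
        rw [if_neg this]
      · rw [if_neg hd]

theorem constantCoeff_artinHasse (p : ℕ) : constantCoeff (artinHasse p) = 1 := by
  rw [← coeff_zero_eq_constantCoeff_apply, artinHasse, coeff_mk]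
  simp

theorem artinHasse_feq {p : ℕ} (hp : p.Prime) :
    (artinHasse p) ^ p
      = pexpand p (artinHasse p) * Ecal ((p : ℚ) • (X : PowerSeries ℚ)) := by
  have h0 := constantCoeff_inner p
  rw [artinHasse_eq_Ecal, Ecal_pow h0 p,
    ← Nat.cast_smul_eq_nsmul ℚ p (artinHasseInner p), inner_id hp,
    Ecal_add (by rw [constantCoeff_pexpand]; exact h0)
      (by rw [smul_eq_C_mul, map_mul, constantCoeff_X, mul_zero]),
    Ecal_pexpand hp.pos h0]

theorem coeff_Ecal_pX (p n : ℕ) :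
    coeff n (Ecal ((p : ℚ) • (X : PowerSeries ℚ)))
      = (p : ℚ) ^ n / (n.factorial : ℚ) := by
  rw [Ecal, coeff_mk]
  rw [Finset.sum_eq_single n]
  · rw [smul_pow, map_smul, coeff_X_pow, if_pos rfl, smul_eq_mul]
    ring
  · intro m _ hm
    rw [smul_pow, map_smul, coeff_X_pow, if_neg (fun h => hm h.symm), smul_zero, mul_zero]
  · intro h
    exact absurd (Finset.mem_range.mpr (Nat.lt_succ_self n)) h

theorem pexpand_map {R S : Type*} [CommRing R] [CommRing S] (φ : R →+* S) (q : ℕ)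
    (f : PowerSeries R) :
    PowerSeries.map φ (pexpand q f) = pexpand q (PowerSeries.map φ f) := by
  ext n
  rw [coeff_map, coeff_pexpand, coeff_pexpand, apply_ite φ, map_zero, coeff_map]

theorem padicValNat_factorial_le' {p : ℕ} [hp : Fact p.Prime] {l : ℕ} (hl : l ≠ 0) :
    padicValNat p l.factorial ≤ l - 1 := by
  have hne : p.digits l ≠ [] := Nat.digits_ne_nil_iff_ne_zero.mpr hl
  have hdig : 1 ≤ (p.digits l).sum := by
    have hlast := Nat.getLast_digit_ne_zero p hl
    have hmem := List.getLast_mem hne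
    calc 1 ≤ (p.digits l).getLast hne := Nat.one_le_iff_ne_zero.mpr hlast
    _ ≤ (p.digits l).sum := List.single_le_sum (fun x _ => Nat.zero_le x) _ hmem
  have h := sub_one_mul_padicValNat_factorial (p := p) l
  have hp2 := hp.out.two_le
  calc padicValNat p l.factorial ≤ (p - 1) * padicValNat p l.factorial :=
        Nat.le_mul_of_pos_left _ (by omega)
    _ = l - (p.digits l).sum := h
    _ ≤ l - 1 := by omega

theorem norm_exp_coeff {p : ℕ} [hp : Fact p.Prime] {l : ℕ} (hl : l ≠ 0) :
    ‖(((p : ℚ) ^ l / (l.factorial : ℚ) : ℚ) : ℚ_[p])‖ ≤ (p : ℝ)⁻¹ := by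
  have hp1 : (1 : ℝ) < p := by exact_mod_cast hp.out.one_lt
  have hp0 : (0 : ℝ) < p := lt_trans one_pos hp1
  have hcast : (((p : ℚ) ^ l / (l.factorial : ℚ) : ℚ) : ℚ_[p])
      = (p : ℚ_[p]) ^ l / ((l.factorial : ℕ) : ℚ_[p]) := by push_cast; ring
  have hfne : ((l.factorial : ℕ) : ℚ_[p]) ≠ 0 :=
    Nat.cast_ne_zero.mpr l.factorial_ne_zero
  rw [hcast, norm_div, norm_pow, Padic.norm_p, Padic.norm_eq_zpow_neg_valuation hfne,
    Padic.valuation_natCast]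
  set v : ℤ := (padicValNat p l.factorial : ℤ) with hv
  have hvle : v ≤ (l : ℤ) - 1 := by
    have := padicValNat_factorial_le' (p := p) hl
    have hl1 : 1 ≤ l := Nat.one_le_iff_ne_zero.mpr hl
    rw [hv]
    omega
  have heq : ((p : ℝ)⁻¹) ^ l / (p : ℝ) ^ (-v) = (p : ℝ) ^ (v - (l : ℤ)) := by
    rw [inv_pow, ← zpow_natCast, div_eq_mul_inv, ← zpow_neg, ← zpow_neg,
      ← zpow_add₀ (ne_of_gt hp0)]
    congr 1
    ring
  rw [heq]
  calc (p : ℝ) ^ (v - (l : ℤ)) ≤ (p : ℝ) ^ (-1 : ℤ) :=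
        zpow_le_zpow_right₀ hp1.le (by omega)
    _ = (p : ℝ)⁻¹ := by rw [zpow_neg_one]

theorem norm_coeff_artinHasse_le_one {p : ℕ} [hp : Fact p.Prime] (n : ℕ) :
    ‖PowerSeries.coeff n (PowerSeries.map (Rat.castHom ℚ_[p]) (artinHasse p))‖ ≤ 1 := by
  set φ : ℚ →+* ℚ_[p] := Rat.castHom ℚ_[p] with hφ
  set F : PowerSeries ℚ_[p] := PowerSeries.map φ (artinHasse p) with hF
  set EQ : PowerSeries ℚ_[p] := PowerSeries.map φ (Ecal ((p : ℚ) • X)) with hEQ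
  have hfeq : F ^ p = pexpand p F * EQ := by
    rw [hF, ← map_pow, artinHasse_feq hp.out, map_mul, pexpand_map]
  have ha0 : coeff 0 F = 1 := by
    rw [hF, coeff_map, coeff_zero_eq_constantCoeff_apply, constantCoeff_artinHasse, map_one]
  have hEQ0 : coeff 0 EQ = 1 := by
    rw [hEQ, coeff_map, coeff_Ecal_pX]
    norm_num
  have hEQl : ∀ l : ℕ, l ≠ 0 → ‖coeff l EQ‖ ≤ (p : ℝ)⁻¹ := by
    intro l hl
    rw [hEQ, coeff_map, coeff_Ecal_pX]
    exact norm_exp_coeff hl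
  induction n using Nat.strong_induction_on with
  | _ n ih =>
    rcases eq_or_ne n 0 with rfl | hn
    · rw [ha0]; exact le_of_eq norm_one
    -- setup
    set a : ℕ → ℚ_[p] := fun m => coeff m F with ha
    set P : Polynomial ℚ_[p] := trunc n F with hP
    have hPcoeff : ∀ m, P.coeff m = if m < n then a m else 0 := by
      intro m; rw [hP, coeff_trunc]
    have hPnorm : ∀ m, ‖P.coeff m‖ ≤ 1 := by
      intro m
      rw [hPcoeff]
      split
      · exact ih m (by assumption)
      · rw [norm_zero]; exact zero_le_one
    have hPconst : Polynomial.constantCoeff P = 1 := by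
      have := hPcoeff 0
      rw [if_pos (Nat.pos_of_ne_zero hn)] at this
      simpa [Polynomial.constantCoeff_apply] using this.trans ha0
    -- Step 1
    have step1 : coeff n (F ^ p)
        = (p : ℚ_[p]) * a n + coeff n ((P : PowerSeries ℚ_[p]) ^ p) := by
      set R : PowerSeries ℚ_[p] := F - (P : PowerSeries ℚ_[p]) with hR
      have hRco : ∀ m, m < n → coeff m R = 0 := by
        intro m hm
        rw [hR, map_sub, Polynomial.coeff_coe, hPcoeff, if_pos hm, sub_self]
      have hXR : (X : PowerSeries ℚ_[p]) ^ n ∣ R := X_pow_dvd_iff.mpr hRco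
      have hFsplit : F = R + (P : PowerSeries ℚ_[p]) := by rw [hR]; ring
      rw [hFsplit, add_pow, map_sum]
      have hsub : Finset.range 2 ⊆ Finset.range (p + 1) := by
        apply Finset.range_subset_range.mpr
        have := hp.out.two_le; omega
      rw [← Finset.sum_subset hsub ?hvan]
      case hvan =>
        intro k hk hk2
        simp only [Finset.mem_range] at hk hk2
        have hk2' : 2 ≤ k := by omega
        obtain ⟨S, hS⟩ := hXR
        have hdvd : (X : PowerSeries ℚ_[p]) ^ (2 * n) ∣
            R ^ k * (P : PowerSeries ℚ_[p]) ^ (p - k) * (p.choose k : PowerSeries ℚ_[p]) := by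
          have h1 : (X : PowerSeries ℚ_[p]) ^ (2 * n) ∣ R ^ k := by
            have : R ^ k = (X ^ n) ^ k * S ^ k := by rw [hS, mul_pow]
            rw [this, ← pow_mul]
            refine Dvd.dvd.mul_right (pow_dvd_pow X ?_) _
            calc 2 * n = n * 2 := by ring
              _ ≤ n * k := Nat.mul_le_mul_left n hk2'
          exact (h1.mul_right _).mul_right _
        exact X_pow_dvd_iff.mp hdvd n (by omega)
      rw [Finset.sum_range_succ, Finset.sum_range_one]
      simp only [pow_zero, one_mul, Nat.choose_zero_right, Nat.cast_one, mul_one,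
        Nat.choose_one_right, pow_one, Nat.sub_zero]
      have hco : coeff n (R * (P : PowerSeries ℚ_[p]) ^ (p - 1) * (p : PowerSeries ℚ_[p]))
          = (p : ℚ_[p]) * a n := by
        have hnat : (p : PowerSeries ℚ_[p]) = C ((p : ℕ) : ℚ_[p]) := by
          rw [map_natCast (C (R := ℚ_[p])) p]
        rw [hnat, coeff_mul_C]
        have hmul : coeff n (R * (P : PowerSeries ℚ_[p]) ^ (p - 1)) = a n := by
          rw [coeff_mul]
          rw [Finset.sum_eq_single_of_mem (n, 0) (by simp)]
          · have hRn : coeff n R = a n := by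
              rw [hR, map_sub, Polynomial.coeff_coe, hPcoeff, if_neg (lt_irrefl n), sub_zero]
            have hc0 : coeff 0 ((P : PowerSeries ℚ_[p]) ^ (p - 1)) = 1 := by
              rw [coeff_zero_eq_constantCoeff_apply, map_pow]
              have hcc : constantCoeff (P : PowerSeries ℚ_[p]) = 1 := by
                rw [Polynomial.constantCoeff_coe, hPcoeff, if_pos (Nat.pos_of_ne_zero hn)]
                exact ha0
              rw [hcc, one_pow]
            rw [hRn, hc0, mul_one]
          · rintro ⟨j, l⟩ hjl hne
            simp only [Finset.HasAntidiagonal.mem_antidiagonal] at hjl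
            have hj : j < n := by
              rcases Nat.lt_or_ge j n with h | h
              · exact h
              · exfalso; apply hne
                have : j = n := by omega
                subst this
                have : l = 0 := by omega
                subst this
                rfl
            rw [hRco j hj, zero_mul]
        rw [hmul, mul_comm]
      rw [hco]
      ring
    -- Step 2
    have step2 : ‖coeff n (pexpand p F * EQ) - coeff n (pexpand p F)‖
        ≤ (p : ℝ)⁻¹ := by
      rw [coeff_mul]
      rw [Finset.sum_eq_sum_sdiff_singleton_add
        (show ((n, 0) : ℕ × ℕ) ∈ Finset.HasAntidiagonal.antidiagonal n by simp)]
      have hterm : (coeff ((n, 0) : ℕ × ℕ).1) (pexpand p F)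
          * (coeff ((n, 0) : ℕ × ℕ).2) EQ = coeff n (pexpand p F) := by
        simp only [hEQ0, mul_one]
      rw [hterm, add_sub_cancel_right]
      have hppos : (0 : ℝ) < (p : ℝ)⁻¹ := by
        have : (0 : ℝ) < p := by exact_mod_cast hp.out.pos
        exact inv_pos.mpr this
      refine IsUltrametricDist.norm_sum_le_of_forall_le_of_nonneg hppos.le ?_
      rintro ⟨j, l⟩ hx
      simp only [Finset.mem_sdiff, Finset.HasAntidiagonal.mem_antidiagonal, Finset.mem_singleton] at hx
      obtain ⟨hjl, hne⟩ := hx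
      have hl : l ≠ 0 := by
        rintro rfl
        apply hne
        have : j = n := by omega
        rw [this]
      have hjn : j < n := by omega
      have h1 : ‖coeff j (pexpand p F)‖ ≤ 1 := by
        rw [coeff_pexpand]
        split
        · exact ih _ (lt_of_le_of_lt (Nat.div_le_self j p) hjn)
        · rw [norm_zero]; exact zero_le_one
      calc ‖coeff j (pexpand p F) * coeff l EQ‖
          = ‖coeff j (pexpand p F)‖ * ‖coeff l EQ‖ := norm_mul _ _
        _ ≤ 1 * (p : ℝ)⁻¹ :=
            mul_le_mul h1 (hEQl l hl) (norm_nonneg _) zero_le_one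
        _ = (p : ℝ)⁻¹ := one_mul _
    -- Step 3
    have step3 : ‖coeff n ((P : PowerSeries ℚ_[p]) ^ p) - coeff n (pexpand p F)‖
        ≤ (p : ℝ)⁻¹ := by
      set b : ℕ → ℤ_[p] := fun m => ⟨P.coeff m, hPnorm m⟩ with hb
      set Q : Polynomial ℤ_[p] :=
        ∑ m ∈ Finset.range n, Polynomial.C (b m) * Polynomial.X ^ m with hQ
      have hQcoeff : ∀ m, Q.coeff m = if m < n then b m else 0 := by
        intro m
        rw [hQ, Polynomial.finset_sum_coeff]
        simp only [Polynomial.coeff_C_mul, Polynomial.coeff_X_pow, mul_ite, mul_one, mul_zero,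
          Finset.sum_ite_eq, Finset.mem_range]
      have hmapQ : Q.map PadicInt.Coe.ringHom = P := by
        apply Polynomial.ext
        intro m
        rw [Polynomial.coeff_map]
        by_cases hm : m < n
        · rw [hQcoeff, if_pos hm]; rfl
        · rw [hQcoeff, if_neg hm, map_zero, hPcoeff, if_neg hm]
      have hcoQp : coeff n ((P : PowerSeries ℚ_[p]) ^ p) = ((Q ^ p).coeff n : ℚ_[p]) := by
        rw [← Polynomial.coe_pow, Polynomial.coeff_coe, ← hmapQ, ← Polynomial.map_pow,
          Polynomial.coeff_map]
        rfl
      set d : ℤ_[p] := (Q ^ p).coeff n - (if p ∣ n then Q.coeff (n / p) else 0) with hd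
      have htoZ : PadicInt.toZMod d = 0 := by
        have h1 : PadicInt.toZMod ((Q ^ p).coeff n)
            = ((Q.map PadicInt.toZMod) ^ p).coeff n := by
          rw [← Polynomial.map_pow, Polynomial.coeff_map]
        rw [hd, map_sub, apply_ite PadicInt.toZMod, map_zero, h1, ← Polynomial.map_frobenius_expand,
          Polynomial.coeff_map, Polynomial.coeff_expand hp.out.pos,
          apply_ite (frobenius (ZMod p) p), map_zero]
        by_cases hdn : p ∣ n
        · rw [if_pos hdn, if_pos hdn, frobenius_def, ZMod.pow_card, Polynomial.coeff_map,
            sub_self]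
        · rw [if_neg hdn, if_neg hdn, sub_self]
      have hdvd : (p : ℤ_[p]) ∣ d := by
        have hker : d ∈ RingHom.ker (PadicInt.toZMod (p := p)) := RingHom.mem_ker.mpr htoZ
        rw [PadicInt.ker_toZMod, PadicInt.maximalIdeal_eq_span_p,
          Ideal.mem_span_singleton] at hker
        exact hker
      have hnormd : ‖d‖ ≤ (p : ℝ)⁻¹ := by
        have h2 := (PadicInt.norm_le_pow_iff_mem_span_pow d 1).mpr
          (by rw [pow_one]; exact Ideal.mem_span_singleton.mpr hdvd)
        simpa using h2
      have hback : coeff n ((P : PowerSeries ℚ_[p]) ^ p) - coeff n (pexpand p F)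
          = (d : ℚ_[p]) := by
        rw [hcoQp, coeff_pexpand, hd, PadicInt.coe_sub]
        congr 1
        by_cases hdn : p ∣ n
        · have hlt : n / p < n := Nat.div_lt_self (Nat.pos_of_ne_zero hn) hp.out.one_lt
          rw [if_pos hdn, if_pos hdn, hQcoeff, if_pos hlt]
          have : ((b (n / p) : ℤ_[p]) : ℚ_[p]) = P.coeff (n / p) := rfl
          rw [this, hPcoeff, if_pos hlt]
        · rw [if_neg hdn, if_neg hdn]
          rfl
      rw [hback, ← PadicInt.norm_def]
      exact hnormd
    -- combine
    have hkey : (p : ℚ_[p]) * a n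
        = (coeff n (pexpand p F * EQ) - coeff n (pexpand p F))
          - (coeff n ((P : PowerSeries ℚ_[p]) ^ p) - coeff n (pexpand p F)) := by
      have h := step1
      rw [hfeq] at h
      linear_combination -h
    have hnorm : ‖(p : ℚ_[p]) * a n‖ ≤ (p : ℝ)⁻¹ := by
      rw [hkey, sub_eq_add_neg]
      refine le_trans (IsUltrametricDist.norm_add_le_max _ _) ?_
      rw [norm_neg]
      exact max_le step2 step3
    have hppos : (0 : ℝ) < (p : ℝ)⁻¹ := by
      have : (0 : ℝ) < p := by exact_mod_cast hp.out.pos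
      exact inv_pos.mpr this
    have hfin : (p : ℝ)⁻¹ * ‖a n‖ ≤ (p : ℝ)⁻¹ * 1 := by
      calc (p : ℝ)⁻¹ * ‖a n‖ = ‖(p : ℚ_[p]) * a n‖ := by
            rw [norm_mul, Padic.norm_p]
        _ ≤ (p : ℝ)⁻¹ := hnorm
        _ = (p : ℝ)⁻¹ * 1 := (mul_one _).symm
    exact le_of_mul_le_mul_left hfin hppos
/-- The coefficients of the Artin–Hasse exponential are `p`-adically integral,
i.e. lie in `ℤ_{(p)} ⊆ ℚ`. -/
theorem artinHasse_coeff_padic_integral {p : ℕ} (hp : p.Prime) (n : ℕ) :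
    padicNorm p (PowerSeries.coeff n (artinHasse p)) ≤ 1 := by
  haveI : Fact p.Prime := ⟨hp⟩
  have h := norm_coeff_artinHasse_le_one (p := p) n
  rw [PowerSeries.coeff_map] at h
  rw [show (Rat.castHom ℚ_[p]) (PowerSeries.coeff n (artinHasse p))
      = ((PowerSeries.coeff n (artinHasse p) : ℚ) : ℚ_[p]) from rfl,
    Padic.eq_padicNorm] at h
  exact_mod_cast h
end

section
/- Let p be an odd prime and K a complete algebraically closed non-archimedean extension of ℚ_p with |p| = p^{-1}. Let b ∈ K satisfy |b| = 1 and |1 + b^p| = p^{-1+1/p}. Then |1 + b| = p^{-(p-1)/p²}. -/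
open Finset IsUltrametricDist

theorem norm_one_add_b_of_norm_one_add_b_pow_p
    {p : ℕ} (hp : p.Prime) (hodd : Odd p)
    {K : Type*} [NormedField K] [CompleteSpace K] [IsAlgClosed K] [IsUltrametricDist K]
    [CharZero K]
    (hnorm : ‖(p : K)‖ = (p : ℝ)⁻¹)
    (b : K) (hb : ‖b‖ = 1)
    (hbp : ‖1 + b ^ p‖ = (p : ℝ) ^ (-(1 : ℝ) + 1 / (p : ℝ))) :
    ‖1 + b‖ = (p : ℝ) ^ (-(((p : ℝ) - 1) / (p : ℝ) ^ 2)) := by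
  have hp1 : (1 : ℝ) < p := by exact_mod_cast hp.one_lt
  have hp0 : (0 : ℝ) < p := lt_trans one_pos hp1
  have hppos : 0 < p := hp.pos
  -- expansion of (1+b)^p
  have hexp : (1 + b) ^ p = (1 + b ^ p) + ∑ k ∈ Ioo 0 p, (p.choose k : K) * b ^ k := by
    rw [add_comm (1 : K) b, add_pow]
    rw [Finset.sum_range_succ]
    rw [Finset.range_eq_Ico, Finset.sum_eq_sum_Ico_succ_bot hppos]
    rw [Finset.Ico_add_one_left_eq_Ioo]
    simp [mul_comm]
    ring
  -- norm of the middle sum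
  have hc : ‖∑ k ∈ Ioo 0 p, (p.choose k : K) * b ^ k‖ ≤ (p : ℝ)⁻¹ := by
    apply norm_sum_le_of_forall_le_of_nonneg (by positivity)
    intro k hk
    simp only [Finset.mem_Ioo] at hk
    obtain ⟨m, hm⟩ := hp.dvd_choose_self hk.1.ne' hk.2
    rw [norm_mul, norm_pow, hb, one_pow, mul_one, hm]
    push_cast
    rw [norm_mul, hnorm]
    calc (p : ℝ)⁻¹ * ‖(m : K)‖ ≤ (p : ℝ)⁻¹ * 1 := by
          exact mul_le_mul_of_nonneg_left (norm_natCast_le_one K m) (by positivity)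
      _ = (p : ℝ)⁻¹ := mul_one _
  -- ‖sum‖ < ‖1 + b^p‖
  have hlt : ‖∑ k ∈ Ioo 0 p, (p.choose k : K) * b ^ k‖ < ‖1 + b ^ p‖ := by
    apply lt_of_le_of_lt hc
    rw [hbp]
    calc (p : ℝ)⁻¹ = (p : ℝ) ^ (-1 : ℝ) := by rw [Real.rpow_neg_one]
      _ < (p : ℝ) ^ (-(1 : ℝ) + 1 / (p : ℝ)) := by
          apply Real.rpow_lt_rpow_left_iff hp1 |>.mpr
          have : 0 < 1 / (p : ℝ) := by positivity
          linarith
  -- hence ‖(1+b)^p‖ = ‖1+b^p‖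
  have hkey : ‖(1 + b) ^ p‖ = ‖1 + b ^ p‖ := by
    rw [hexp]
    rcases eq_or_ne ‖1 + b ^ p‖ ‖∑ k ∈ Ioo 0 p, (p.choose k : K) * b ^ k‖ with h | h
    · exact absurd h.symm (ne_of_lt hlt)
    · rw [norm_add_eq_max_of_norm_ne_norm h, max_eq_left hlt.le]
  rw [norm_pow, hbp] at hkey
  -- conclude by injectivity of x ↦ x^p on nonneg reals
  have hrhs : ((p : ℝ) ^ (-(((p : ℝ) - 1) / (p : ℝ) ^ 2))) ^ p
      = (p : ℝ) ^ (-(1 : ℝ) + 1 / (p : ℝ)) := by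
    rw [← Real.rpow_natCast ((p : ℝ) ^ (-(((p : ℝ) - 1) / (p : ℝ) ^ 2))) p,
      ← Real.rpow_mul hp0.le]
    congr 1
    field_simp
    ring
  refine (pow_left_strictMonoOn₀ (M₀ := ℝ) (n := p) hppos.ne').injOn
    (norm_nonneg _) (Real.rpow_nonneg hp0.le _) ?_
  simpa [hrhs] using hkey
end
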